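/- Let X̄ satisfy Assumption 1 and let u^m ⇀ u weakly in L²(0,T; H¹₀(Ω)^d) and w^m ⇀ w weakly in L²(0,T; H¹(B)^d), with c(φ_i(t), (u^m∘X̄)(t) − w^m(t)) = 0 for i = 1,…,m and a.e. t. Then u^m∘X̄ ⇀ u∘X̄ weakly in L²(0,T; H¹(B)^d), and the limit satisfies c(μ, (u∘X̄)(t) − w(t)) = 0 for all μ ∈ H¹(B)^d and a.e. t ∈ (0,T); that is, (u(t), w(t)) ∈ K_t. -/

import Mathlib

open MeasureTheory Set Filter Topology
open scoped ENNReal RealInnerProductSpace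

section Aux

variable {E F : Type*} [NormedAddCommGroup E] [InnerProductSpace ℝ E]
  [NormedAddCommGroup F] [InnerProductSpace ℝ F]

/-- The pointwise inner product of two L² functions is integrable. -/
theorem memL2_inner_integrable {α : Type*} [MeasurableSpace α] {μ : Measure α}
    {f g : α → E} (hf : MemLp f 2 μ) (hg : MemLp g 2 μ) :
    Integrable (fun t => ⟪f t, g t⟫) μ := by
  have h := L2.integrable_inner (𝕜 := ℝ) (hf.toLp f) (hg.toLp g)
  refine h.congr ?_
  filter_upwards [hf.coeFn_toLp, hg.coeFn_toLp] with t h1 h2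
  simp only [h1, h2]

/-- Applying a (uniformly bounded, continuous-in-`t`) operator family to an
L² function yields an L² function. -/
theorem memL2_clm_apply {S : Set ℝ} (hS : MeasurableSet S)
    (Φ : ℝ → E →L[ℝ] F) (hΦ : ContinuousOn Φ S) {M : ℝ}
    (hM : ∀ t ∈ S, ‖Φ t‖ ≤ M) {f : ℝ → E}
    (hf : MemLp f 2 (volume.restrict S)) :
    MemLp (fun t => Φ t (f t)) 2 (volume.restrict S) := by
  haveI : SecondCountableTopologyEither ℝ (E →L[ℝ] F) :=
    secondCountableTopologyEither_of_left _ _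
  have hΦm : AEStronglyMeasurable Φ (volume.restrict S) :=
    hΦ.aestronglyMeasurable hS
  have hmeas : AEStronglyMeasurable (fun t => Φ t (f t)) (volume.restrict S) :=
    isBoundedBilinearMap_apply.continuous.comp_aestronglyMeasurable
      (hΦm.prodMk hf.1)
  refine hf.of_le_mul (c := M) hmeas ?_
  filter_upwards [ae_restrict_mem hS] with t ht
  calc ‖Φ t (f t)‖ ≤ ‖Φ t‖ * ‖f t‖ := (Φ t).le_opNorm _
    _ ≤ M * ‖f t‖ := mul_le_mul_of_nonneg_right (hM t ht) (norm_nonneg _)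

end Aux

theorem weak_limit_belongs_to_Kt
    (V H1B : Type)
    [NormedAddCommGroup V] [InnerProductSpace ℝ V] [CompleteSpace V]
    [NormedAddCommGroup H1B] [InnerProductSpace ℝ H1B] [CompleteSpace H1B]
    (T : ℝ) (hT : 0 < T)
    -- composition with X̄(t) (Assumption 1): bounded uniformly and continuous in t
    (comp : ℝ → V →L[ℝ] H1B) (M : ℝ)
    (hcompcont : ContinuousOn comp (Icc 0 T))
    (hcompbdd : ∀ t ∈ Icc 0 T, ‖comp t‖ ≤ M)
    (ψ : ℕ → V)
    -- for each t, {φ_i(t)} = {comp t (ψ i)} is a basis (a total family) of H¹(B)^d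
    (hbasis : ∀ t ∈ Ioc 0 T, ∀ z : H1B,
      (∀ i : ℕ, ⟪comp t (ψ i), z⟫ = 0) → z = 0)
    (um : ℕ → ℝ → V) (u : ℝ → V) (wm : ℕ → ℝ → H1B) (w : ℝ → H1B)
    (hum : ∀ n, MemLp (um n) 2 (volume.restrict (Ioc 0 T)))
    (hu : MemLp u 2 (volume.restrict (Ioc 0 T)))
    (hwm : ∀ n, MemLp (wm n) 2 (volume.restrict (Ioc 0 T)))
    (hw : MemLp w 2 (volume.restrict (Ioc 0 T)))
    -- u^m ⇀ u weakly in L²(0,T;H¹₀(Ω)^d)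
    (huweak : ∀ v : ℝ → V, MemLp v 2 (volume.restrict (Ioc 0 T)) →
      Tendsto (fun n => ∫ t in Ioc 0 T, ⟪um n t - u t, v t⟫) atTop (nhds 0))
    -- w^m ⇀ w weakly in L²(0,T;H¹(B)^d)
    (hwweak : ∀ z : ℝ → H1B, MemLp z 2 (volume.restrict (Ioc 0 T)) →
      Tendsto (fun n => ∫ t in Ioc 0 T, ⟪wm n t - w t, z t⟫) atTop (nhds 0))
    -- the Galerkin constraint c(φ_i(t), (u^m∘X̄)(t) − w^m(t)) = 0, i = 1,…,m
    (hconstraint : ∀ n : ℕ, ∀ᵐ t ∂(volume.restrict (Ioc 0 T)),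
      ∀ i < n, ⟪comp t (ψ i), comp t (um n t) - wm n t⟫ = 0) :
    -- u^m∘X̄ ⇀ u∘X̄ weakly in L²(0,T;H¹(B)^d)
    (∀ z : ℝ → H1B, MemLp z 2 (volume.restrict (Ioc 0 T)) →
      Tendsto (fun n => ∫ t in Ioc 0 T, ⟪comp t (um n t) - comp t (u t), z t⟫)
        atTop (nhds 0)) ∧
    -- the limit pair (u(t), w(t)) belongs to K_t for a.e. t
    (∀ᵐ t ∂(volume.restrict (Ioc 0 T)),
      ∀ μ : H1B, ⟪μ, comp t (u t) - w t⟫ = 0) := by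
  have hIoc : MeasurableSet (Ioc (0:ℝ) T) := measurableSet_Ioc
  haveI : IsFiniteMeasure (volume.restrict (Ioc (0:ℝ) T)) := by
    constructor
    rw [Measure.restrict_apply_univ]
    exact measure_Ioc_lt_top
  have hsub : Ioc (0:ℝ) T ⊆ Icc 0 T := Ioc_subset_Icc_self
  have hccomp : ContinuousOn comp (Ioc 0 T) := hcompcont.mono hsub
  have hMbd : ∀ t ∈ Ioc (0:ℝ) T, ‖comp t‖ ≤ M := fun t ht => hcompbdd t (hsub ht)
  -- composition with the operator family preserves L²
  have compL2 : ∀ {f : ℝ → V}, MemLp f 2 (volume.restrict (Ioc 0 T)) →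
      MemLp (fun t => comp t (f t)) 2 (volume.restrict (Ioc 0 T)) :=
    fun hf => memL2_clm_apply hIoc comp hccomp hMbd hf
  -- the adjoint family
  set A : ℝ → H1B →L[ℝ] V := fun t => ContinuousLinearMap.adjoint (comp t) with hA
  have hAcont : ContinuousOn A (Ioc 0 T) :=
    (ContinuousLinearMap.adjoint (𝕜 := ℝ) (E := V) (F := H1B)
      ).continuous.comp_continuousOn hccomp
  have hAbd : ∀ t ∈ Ioc (0:ℝ) T, ‖A t‖ ≤ M := by
    intro t ht
    have : ‖A t‖ = ‖comp t‖ := ContinuousLinearMap.adjoint.norm_map (comp t)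
    rw [this]; exact hMbd t ht
  have adjL2 : ∀ {z : ℝ → H1B}, MemLp z 2 (volume.restrict (Ioc 0 T)) →
      MemLp (fun t => A t (z t)) 2 (volume.restrict (Ioc 0 T)) :=
    fun hz => memL2_clm_apply hIoc A hAcont hAbd hz
  -- Part 1: weak convergence of u^m ∘ X̄
  have hpart1 : ∀ z : ℝ → H1B, MemLp z 2 (volume.restrict (Ioc 0 T)) →
      Tendsto (fun n => ∫ t in Ioc 0 T, ⟪comp t (um n t) - comp t (u t), z t⟫)
        atTop (nhds 0) := by
    intro z hz
    refine (huweak (fun t => A t (z t)) (adjL2 hz)).congr fun n => ?_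
    refine integral_congr_ae (Eventually.of_forall fun t => ?_)
    simp only [hA, ContinuousLinearMap.adjoint_inner_right, map_sub]
  refine ⟨hpart1, ?_⟩
  -- Part 2
  have hcu : MemLp (fun t => comp t (u t)) 2 (volume.restrict (Ioc 0 T)) := compL2 hu
  have hdiff : MemLp (fun t => comp t (u t) - w t) 2 (volume.restrict (Ioc 0 T)) :=
    hcu.sub hw
  have key : ∀ i : ℕ,
      (fun t => ⟪comp t (u t) - w t, comp t (ψ i)⟫) =ᵐ[volume.restrict (Ioc 0 T)]
        (0 : ℝ → ℝ) := by
    intro i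
    have hφi : MemLp (fun t => comp t (ψ i)) 2 (volume.restrict (Ioc 0 T)) :=
      compL2 (memLp_const (ψ i))
    have hg : Integrable (fun t => ⟪comp t (u t) - w t, comp t (ψ i)⟫)
        (volume.restrict (Ioc 0 T)) := memL2_inner_integrable hdiff hφi
    refine hg.ae_eq_zero_of_forall_setIntegral_eq_zero ?_
    intro s hs _
    set z : ℝ → H1B := s.indicator (fun t => comp t (ψ i)) with hzdef
    have hz : MemLp z 2 (volume.restrict (Ioc 0 T)) := hφi.indicator hs
    -- the Galerkin-constrained integrals vanish for n > i
    have hE0 : ∀ n, i < n →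
        (∫ t in Ioc 0 T, ⟪comp t (um n t) - wm n t, z t⟫) = 0 := by
      intro n hn
      have hae : (fun t => ⟪comp t (um n t) - wm n t, z t⟫)
          =ᵐ[volume.restrict (Ioc 0 T)] (0 : ℝ → ℝ) := by
        filter_upwards [hconstraint n] with t ht
        have h0 := ht i hn
        by_cases hts : t ∈ s
        · simp only [hzdef, Set.indicator_of_mem hts, Pi.zero_apply]
          rw [real_inner_comm]; exact h0
        · simp only [hzdef, Set.indicator_of_notMem hts, inner_zero_right,
            Pi.zero_apply]
      rw [integral_congr_ae hae]
      simp
    -- splitting the integral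
    have hcum : ∀ n, MemLp (fun t => comp t (um n t)) 2 (volume.restrict (Ioc 0 T)) :=
      fun n => compL2 (hum n)
    have hsplit : ∀ n,
        (∫ t in Ioc 0 T, ⟪comp t (um n t) - wm n t, z t⟫)
          = ((∫ t in Ioc 0 T, ⟪comp t (um n t) - comp t (u t), z t⟫)
              - ∫ t in Ioc 0 T, ⟪wm n t - w t, z t⟫)
            + ∫ t in Ioc 0 T, ⟪comp t (u t) - w t, z t⟫ := by
      intro n
      have h1 : Integrable (fun t => ⟪comp t (um n t) - comp t (u t), z t⟫)
          (volume.restrict (Ioc 0 T)) :=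
        memL2_inner_integrable ((hcum n).sub hcu) hz
      have h2 : Integrable (fun t => ⟪wm n t - w t, z t⟫)
          (volume.restrict (Ioc 0 T)) :=
        memL2_inner_integrable ((hwm n).sub hw) hz
      have h3 : Integrable (fun t => ⟪comp t (u t) - w t, z t⟫)
          (volume.restrict (Ioc 0 T)) :=
        memL2_inner_integrable hdiff hz
      have heq : (∫ t in Ioc 0 T, ⟪comp t (um n t) - wm n t, z t⟫)
          = ∫ t in Ioc 0 T, ((⟪comp t (um n t) - comp t (u t), z t⟫
              - ⟪wm n t - w t, z t⟫) + ⟪comp t (u t) - w t, z t⟫) := by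
        refine integral_congr_ae (Eventually.of_forall fun t => ?_)
        simp only [inner_sub_left]
        ring
      have h12 : Integrable (fun t => ⟪comp t (um n t) - comp t (u t), z t⟫
          - ⟪wm n t - w t, z t⟫) (volume.restrict (Ioc 0 T)) := h1.sub h2
      rw [heq, integral_add h12 h3, integral_sub h1 h2]
    have hBn := hpart1 z hz
    have hDn := hwweak z hz
    have hlim : Tendsto (fun n => ∫ t in Ioc 0 T, ⟪comp t (um n t) - wm n t, z t⟫)
        atTop (nhds ((0 - 0) + ∫ t in Ioc 0 T, ⟪comp t (u t) - w t, z t⟫)) :=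
      (((hBn.sub hDn).add tendsto_const_nhds).congr fun n => (hsplit n).symm)
    have hlim0 : Tendsto (fun n => ∫ t in Ioc 0 T, ⟪comp t (um n t) - wm n t, z t⟫)
        atTop (nhds 0) := by
      refine Tendsto.congr' ?_ (tendsto_const_nhds (x := (0:ℝ)))
      filter_upwards [eventually_gt_atTop i] with n hn
      exact (hE0 n hn).symm
    have hC : (∫ t in Ioc 0 T, ⟪comp t (u t) - w t, z t⟫) = 0 := by
      have := tendsto_nhds_unique hlim hlim0
      linarith
    -- relate to the set integral
    rw [← integral_indicator hs]
    refine Eq.trans ?_ hC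
    refine integral_congr_ae (Eventually.of_forall fun t => ?_)
    by_cases hts : t ∈ s
    · simp only [hzdef, Set.indicator_of_mem hts]
    · simp only [hzdef, Set.indicator_of_notMem hts, inner_zero_right]
  have key2 : ∀ᵐ t ∂(volume.restrict (Ioc 0 T)),
      ∀ i : ℕ, ⟪comp t (u t) - w t, comp t (ψ i)⟫ = 0 := by
    rw [ae_all_iff]
    intro i
    filter_upwards [key i] with t ht
    simpa using ht
  filter_upwards [key2, ae_restrict_mem hIoc] with t ht htmem
  intro μ'
  have hz0 : comp t (u t) - w t = 0 := by
    refine hbasis t htmem _ fun i => ?_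
    rw [real_inner_comm]
    exact ht i
  rw [hz0, inner_zero_right]
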